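/- The functional cost recursion for FPOP holds: defining Cost*_t(μ) = min over 0 ≤ τ ≤ t of Cost^τ_t(μ), where Cost^τ_t(μ) = F(τ) + β + ∑_{i=τ+1}^{t} γ(y_i, μ) for τ < t and Cost^t_t(μ) = F(t) + β, one has Cost*_t(μ) = min{ Cost*_{t-1}(μ) + γ(y_t, μ), F(t) + β } for all t ≥ 1 and all μ. -/

import Mathlib

/-- The FPOP candidate cost function `Cost^τ_t(μ)`. -/
noncomputable def fpopCost (y : ℕ → ℝ) (γ : ℝ → ℝ → ℝ) (β : ℝ) (F : ℕ → ℝ)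
    (τ t : ℕ) (μ : ℝ) : ℝ :=
  if τ = t then F t + β else F τ + β + ∑ i ∈ Finset.Ioc τ t, γ (y i) μ

/-- `Cost*_t(μ) = min over 0 ≤ τ ≤ t of Cost^τ_t(μ)`. -/
noncomputable def fpopCostStar (y : ℕ → ℝ) (γ : ℝ → ℝ → ℝ) (β : ℝ) (F : ℕ → ℝ)
    (t : ℕ) (μ : ℝ) : ℝ :=
  (Finset.range (t + 1)).inf' (Finset.nonempty_range_iff.mpr (Nat.succ_ne_zero t))
    (fun τ => fpopCost y γ β F τ t μ)

/-- the FPOP functional cost recursion. -/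
theorem fpop_functional_recursion (y : ℕ → ℝ) (γ : ℝ → ℝ → ℝ) (β : ℝ) (hβ : 0 ≤ β)
    (C : ℕ → ℕ → ℝ)
    (hC : ∀ τ t : ℕ, τ < t →
      IsLeast {x : ℝ | ∃ μ : ℝ, x = ∑ i ∈ Finset.Ioc τ t, γ (y i) μ} (C τ t))
    (F : ℕ → ℝ) (hF0 : F 0 = -β)
    (hF : ∀ t : ℕ, ∀ ht : 1 ≤ t,
      F t = (Finset.range t).inf' (Finset.nonempty_range_iff.mpr (by omega))
        (fun τ => F τ + C τ t + β)) :
    ∀ t : ℕ, 1 ≤ t → ∀ μ : ℝ,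
      fpopCostStar y γ β F t μ =
        min (fpopCostStar y γ β F (t - 1) μ + γ (y t) μ) (F t + β) := by
  rintro t ht μ
  obtain ⟨n, rfl⟩ : ∃ n, t = n + 1 := ⟨t - 1, by omega⟩
  simp only [Nat.add_sub_cancel]
  have hne : (Finset.range (n + 1)).Nonempty :=
    Finset.nonempty_range_iff.mpr (Nat.succ_ne_zero n)
  have hsplit : Finset.range (n + 2) = insert (n + 1) (Finset.range (n + 1)) := by
    rw [Finset.range_add_one]
  have hpt : ∀ τ ∈ Finset.range (n + 1),
      fpopCost y γ β F τ (n + 1) μ = fpopCost y γ β F τ n μ + γ (y (n + 1)) μ := by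
    intro τ hτ
    have hτn : τ ≤ n := by simpa [Nat.lt_succ_iff] using hτ
    have hsum : ∑ i ∈ Finset.Ioc τ (n + 1), γ (y i) μ
        = (∑ i ∈ Finset.Ioc τ n, γ (y i) μ) + γ (y (n + 1)) μ :=
      Finset.sum_Ioc_succ_top hτn _
    by_cases h : τ = n
    · subst h
      simp [fpopCost, hsum, Nat.succ_ne_self]
    · have : τ ≠ n + 1 := by omega
      simp [fpopCost, h, this, hsum]
      ring
  have hmain : (Finset.range (n + 1)).inf' hne (fun τ => fpopCost y γ β F τ (n + 1) μ)
      = (Finset.range (n + 1)).inf' hne (fun τ => fpopCost y γ β F τ n μ)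
        + γ (y (n + 1)) μ := by
    rw [Finset.inf'_congr hne rfl hpt]
    exact (Finset.apply_inf'_eq_inf'_comp hne (· + γ (y (n+1)) μ) (fun a b => (min_add_add_right a b _).symm)).symm
  unfold fpopCostStar
  rw [Finset.inf'_congr (Finset.nonempty_range_iff.mpr (Nat.succ_ne_zero (n+1)))
    hsplit (fun _ _ => rfl)]
  rw [Finset.inf'_insert, hmain, fpopCost, if_pos rfl]
  rw [min_comm]
  exact hne
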